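/- The distance d_Λ(X_t, Y_s) = ‖X_{t,s-t} - Y_s‖_∞ + (s - t) (for t ≤ s, where X_{t,s-t} denotes the flat extension of X_t to [0,s]) defines a metric on the space Λ of càdlàg paths with varying endpoints: it is nonnegative, vanishes iff the paths coincide (same horizon and equal pointwise), is symmetric, and satisfies the triangle inequality. -/

import Mathlib

open Set

/-- A càdlàg (right-continuous with left limits) real path. -/
def Cadlag (f : ℝ → ℝ) : Prop :=
  (∀ x, ContinuousWithinAt f (Ici x) x) ∧
    ∀ x, ∃ l, Filter.Tendsto f (nhdsWithin x (Iio x)) (nhds l)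

/-- Flat extension `X_{t,·}`: freeze the path at its time-`t` value after time `t`. -/
noncomputable def flatExt (t : ℝ) (X : ℝ → ℝ) : ℝ → ℝ := fun u => if u < t then X u else X t

/-- Dupire's distance on the space of paths with varying horizons:
`d_Λ((t,X),(s,Y)) = ‖X_{t,s-t} - Y_s‖_∞ + |s - t|`. -/
noncomputable def dLambda (t : ℝ) (X : ℝ → ℝ) (s : ℝ) (Y : ℝ → ℝ) : ℝ :=
  (⨆ u : Icc (0 : ℝ) (max t s), |flatExt t X u - flatExt s Y u|) + |s - t|

lemma cadlag_bdd {f : ℝ → ℝ} (hf : Cadlag f) (a b : ℝ) :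
    ∃ C, ∀ u ∈ Icc a b, |f u| ≤ C := by
  obtain ⟨hr, hl⟩ := hf
  have H : ∀ u ∈ Icc a b, |f u| ≤ (0:ℝ) → True := fun _ _ _ => trivial
  have := isCompact_Icc (a := a) (b := b)
  refine this.induction_on (p := fun s => ∃ C, ∀ u ∈ s, |f u| ≤ C) ⟨0, by simp⟩
    (fun s t hst ⟨C, hC⟩ => ⟨C, fun u hu => hC u (hst hu)⟩)
    (fun s t ⟨C, hC⟩ ⟨D, hD⟩ => ⟨max C D, fun u hu => by
      rcases hu with hu | hu
      · exact (hC u hu).trans (le_max_left _ _)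
      · exact (hD u hu).trans (le_max_right _ _)⟩)
    (fun x hx => ?_)
  obtain ⟨l, hlx⟩ := hl x
  have h1 : ∀ᶠ u in nhdsWithin x (Ici x), |f u| ≤ max (|f x| + 1) (|l| + 1) := by
    have := (hr x).eventually (Metric.closedBall_mem_nhds (f x) one_pos)
    filter_upwards [this] with u hu
    have : |f u - f x| ≤ 1 := by simpa [Real.dist_eq] using hu
    have : |f u| ≤ |f x| + 1 := by
      have := abs_sub_abs_le_abs_sub (f u) (f x)
      linarith
    exact this.trans (le_max_left _ _)
  have h2 : ∀ᶠ u in nhdsWithin x (Iio x), |f u| ≤ max (|f x| + 1) (|l| + 1) := by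
    have := hlx.eventually (Metric.closedBall_mem_nhds l one_pos)
    filter_upwards [this] with u hu
    have : |f u - l| ≤ 1 := by simpa [Real.dist_eq] using hu
    have : |f u| ≤ |l| + 1 := by
      have := abs_sub_abs_le_abs_sub (f u) l
      linarith
    exact this.trans (le_max_right _ _)
  have h3 : ∀ᶠ u in nhds x, |f u| ≤ max (|f x| + 1) (|l| + 1) := by
    rw [← nhdsLT_sup_nhdsGE x]
    exact Filter.eventually_sup.2 ⟨h2, h1⟩
  exact ⟨_, nhdsWithin_le_nhds h3, max (|f x| + 1) (|l| + 1), fun u hu => hu⟩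

lemma flat_bdd {X : ℝ → ℝ} (hX : Cadlag X) {t M : ℝ} (ht : t ∈ Icc (0:ℝ) M) :
    ∃ C, ∀ u ∈ Icc (0:ℝ) M, |flatExt t X u| ≤ C := by
  obtain ⟨C, hC⟩ := cadlag_bdd hX 0 M
  refine ⟨C, fun u hu => ?_⟩
  unfold flatExt
  split
  · exact hC u hu
  · exact hC t ht

lemma bdd_pair {X Y : ℝ → ℝ} (hX : Cadlag X) (hY : Cadlag Y) {t s : ℝ}
    (ht : 0 ≤ t) (hs : 0 ≤ s) :
    BddAbove (Set.range fun u : Icc (0:ℝ) (max t s) => |flatExt t X u - flatExt s Y u|) := by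
  obtain ⟨C, hC⟩ := flat_bdd hX (t := t) (M := max t s) ⟨ht, le_max_left _ _⟩
  obtain ⟨D, hD⟩ := flat_bdd hY (t := s) (M := max t s) ⟨hs, le_max_right _ _⟩
  refine ⟨C + D, ?_⟩
  rintro _ ⟨u, rfl⟩
  calc |flatExt t X u - flatExt s Y u| ≤ |flatExt t X u| + |flatExt s Y u| := abs_sub _ _
    _ ≤ C + D := add_le_add (hC u u.2) (hD u u.2)

lemma flatExt_ge {t : ℝ} {X : ℝ → ℝ} {u : ℝ} (h : t ≤ u) : flatExt t X u = X t := by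
  simp [flatExt, not_lt.2 h]

lemma term_le_sup {X Y : ℝ → ℝ} (hX : Cadlag X) (hY : Cadlag Y) {t s : ℝ}
    (ht : 0 ≤ t) (hs : 0 ≤ s) {u : ℝ} (hu : 0 ≤ u) :
    |flatExt t X u - flatExt s Y u| ≤
      ⨆ v : Icc (0:ℝ) (max t s), |flatExt t X v - flatExt s Y v| := by
  by_cases h : u ≤ max t s
  · exact le_ciSup (bdd_pair hX hY ht hs) ⟨u, hu, h⟩
  · push_neg at h
    have h1 : flatExt t X u = flatExt t X (max t s) := by
      rw [flatExt_ge ((le_max_left t s).trans h.le), flatExt_ge (le_max_left t s)]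
    have h2 : flatExt s Y u = flatExt s Y (max t s) := by
      rw [flatExt_ge ((le_max_right t s).trans h.le), flatExt_ge (le_max_right t s)]
    rw [h1, h2]
    exact le_ciSup (bdd_pair hX hY ht hs) ⟨max t s, le_max_of_le_left ht, le_refl _⟩

theorem dLambda_is_metric (T : ℝ) (hT : 0 < T) :
    (∀ t s : ℝ, t ∈ Icc 0 T → s ∈ Icc 0 T → ∀ X Y : ℝ → ℝ,
        Cadlag X → Cadlag Y → 0 ≤ dLambda t X s Y) ∧
    (∀ t s : ℝ, t ∈ Icc 0 T → s ∈ Icc 0 T → ∀ X Y : ℝ → ℝ,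
        Cadlag X → Cadlag Y →
        (dLambda t X s Y = 0 ↔ t = s ∧ ∀ u ∈ Icc 0 t, X u = Y u)) ∧
    (∀ t s : ℝ, t ∈ Icc 0 T → s ∈ Icc 0 T → ∀ X Y : ℝ → ℝ,
        Cadlag X → Cadlag Y → dLambda t X s Y = dLambda s Y t X) ∧
    (∀ t s r : ℝ, t ∈ Icc 0 T → s ∈ Icc 0 T → r ∈ Icc 0 T →
        ∀ X Y Z : ℝ → ℝ, Cadlag X → Cadlag Y → Cadlag Z →
        dLambda t X r Z ≤ dLambda t X s Y + dLambda s Y r Z) := by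
  refine ⟨?_, ?_, ?_, ?_⟩
  · intro t s _ _ X Y _ _
    exact add_nonneg (Real.iSup_nonneg fun u => abs_nonneg _) (abs_nonneg _)
  · intro t s ht hs X Y hX hY
    constructor
    · intro h
      have hsup : 0 ≤ ⨆ u : Icc (0:ℝ) (max t s), |flatExt t X u - flatExt s Y u| :=
        Real.iSup_nonneg fun u => abs_nonneg _
      have habs : |s - t| = 0 := by
        have := abs_nonneg (s - t)
        unfold dLambda at h; linarith
      have hts : t = s := by
        have := abs_eq_zero.1 habs; linarith
      have hsz : (⨆ u : Icc (0:ℝ) (max t s), |flatExt t X u - flatExt s Y u|) = 0 := by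
        unfold dLambda at h; linarith
      refine ⟨hts, fun u hu => ?_⟩
      have hle := le_ciSup (bdd_pair hX hY ht.1 hs.1)
        (⟨u, hu.1, hu.2.trans (le_max_left t s)⟩ : Icc (0:ℝ) (max t s))
      rw [hsz] at hle
      have heq : flatExt t X u = flatExt s Y u := by
        have := abs_nonneg (flatExt t X u - flatExt s Y u)
        have : |flatExt t X u - flatExt s Y u| = 0 := le_antisymm hle this
        have := abs_eq_zero.1 this; linarith
      subst hts
      rcases lt_or_eq_of_le hu.2 with h' | h'
      · simpa [flatExt, h'] using heq
      · subst h'; simpa [flatExt] using heq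
    · rintro ⟨rfl, hXY⟩
      unfold dLambda
      rw [sub_self, abs_zero, add_zero]
      have hne : Nonempty (Icc (0:ℝ) (max t t)) := ⟨⟨0, le_refl 0, le_max_of_le_left ht.1⟩⟩
      have : ∀ u : Icc (0:ℝ) (max t t), |flatExt t X u - flatExt t Y u| = 0 := by
        rintro ⟨u, hu0, hut⟩
        rw [max_self] at hut
        have : flatExt t X u = flatExt t Y u := by
          unfold flatExt
          split
          · exact hXY u ⟨hu0, hut⟩
          · exact hXY t ⟨ht.1, le_refl t⟩
        rw [this, sub_self, abs_zero]
      simp only [this]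
      exact ciSup_const
  · intro t s _ _ X Y _ _
    unfold dLambda
    rw [max_comm s t, abs_sub_comm t s]
    congr 1
    exact iSup_congr fun u => abs_sub_comm _ _
  · intro t s r ht hs hr X Y Z hX hY hZ
    unfold dLambda
    have hne : Nonempty (Icc (0:ℝ) (max t r)) := ⟨⟨0, le_refl 0, le_max_of_le_left ht.1⟩⟩
    have hsup : (⨆ u : Icc (0:ℝ) (max t r), |flatExt t X u - flatExt r Z u|) ≤
        (⨆ u : Icc (0:ℝ) (max t s), |flatExt t X u - flatExt s Y u|) +
        (⨆ u : Icc (0:ℝ) (max s r), |flatExt s Y u - flatExt r Z u|) := by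
      refine ciSup_le fun u => ?_
      calc |flatExt t X u - flatExt r Z u|
          ≤ |flatExt t X u - flatExt s Y u| + |flatExt s Y u - flatExt r Z u| :=
            abs_sub_le _ _ _
        _ ≤ _ := add_le_add (term_le_sup hX hY ht.1 hs.1 u.2.1)
            (term_le_sup hY hZ hs.1 hr.1 u.2.1)
    have habs : |r - t| ≤ |s - t| + |r - s| := by
      have h1 := abs_sub_le r s t
      linarith
    linarith
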